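/- Let p be a prime, q = p^r, m ≥ 1, and c ∈ 𝔽_q. With the convention 0^{−1} = 0, one has q² · #{z ∈ 𝔽_{q^m} : Tr_{𝔽_{q^m}/𝔽_q}(z) = 0 and Tr_{𝔽_{q^m}/𝔽_q}(z^{−1}) = c} = q^m + ε + Σ_{v ∈ 𝔽_q^*} χ(−cv) · Σ_{u ∈ 𝔽_q^*} S_{−1}^{(m)}(u, v), where ε = (q−1)² if c = 0 and ε = 1 − q if c ≠ 0. -/

import Mathlib

open Finset

/-- The canonical additive character of a finite field `K` of characteristic `p`:
`e(x) = exp(2πi · Tr_{K/𝔽_p}(x) / p)`. -/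
noncomputable def addChar (p : ℕ) (K : Type) [Field K] [Fintype K] [Algebra (ZMod p) K]
    (x : K) : ℂ :=
  Complex.exp (2 * Real.pi * Complex.I * ((Algebra.trace (ZMod p) K x).val : ℂ) / p)

section Aux

variable (p : ℕ) [hp : Fact p.Prime] (K : Type) [Field K] [Fintype K] [Algebra (ZMod p) K]

private lemma zmod_exp_add (a b : ZMod p) :
    Complex.exp (2 * Real.pi * Complex.I * ((a+b).val : ℂ) / p) =
    Complex.exp (2 * Real.pi * Complex.I * (a.val : ℂ) / p) *
    Complex.exp (2 * Real.pi * Complex.I * (b.val : ℂ) / p) := by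
  have hp0 : (p:ℂ) ≠ 0 := by exact_mod_cast hp.out.ne_zero
  rw [← Complex.exp_add, ← add_div, ← mul_add]
  have h : (a.val + b.val : ℕ) = p * ((a.val + b.val)/p) + (a+b).val := by
    rw [ZMod.val_add]; exact (Nat.div_add_mod _ p).symm
  have hc : ((a.val:ℂ) + b.val) = p * (((a.val + b.val)/p : ℕ) : ℂ) + ((a+b).val : ℂ) := by
    exact_mod_cast congrArg (Nat.cast : ℕ → ℂ) h
  have key : 2 * (Real.pi:ℂ) * Complex.I * ((a.val:ℂ) + (b.val:ℂ)) / p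
      = 2 * (Real.pi:ℂ) * Complex.I * ((a+b).val:ℂ) / p
        + ((((a.val+b.val)/p : ℕ)):ℂ) * (2 * Real.pi * Complex.I) := by
    rw [hc]; field_simp; ring
  rw [key, Complex.exp_add,
    show Complex.exp (((((a.val+b.val)/p : ℕ)):ℂ) * (2 * Real.pi * Complex.I)) = 1 from
      by exact_mod_cast Complex.exp_int_mul_two_pi_mul_I _, mul_one]

/-- `addChar` bundled as an `AddChar`. -/
noncomputable def auxPsi : AddChar K ℂ where
  toFun := addChar p K
  map_zero_eq_one' := by simp [addChar]
  map_add_eq_mul' := by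
    intro a b
    simp only [addChar, map_add]
    exact zmod_exp_add p _ _

lemma auxPsi_apply (x : K) : auxPsi p K x = addChar p K x := rfl

lemma auxPsi_ne_one : auxPsi p K ≠ 1 := by
  have hnd : ∃ b : K, Algebra.trace (ZMod p) K ((1:K) * b) ≠ 0 := by
    have htr := (traceForm_nondegenerate (ZMod p) K).1 (1:K)
    simp_rw [Algebra.traceForm_apply] at htr
    by_contra! hf
    exact one_ne_zero (htr hf)
  obtain ⟨b, hb⟩ := hnd
  rw [one_mul] at hb
  intro hone
  have h1 : auxPsi p K b = 1 := by rw [hone]; simp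
  rw [auxPsi_apply, addChar] at h1
  set a : ZMod p := Algebra.trace (ZMod p) K b with ha
  obtain ⟨n, hn⟩ := Complex.exp_eq_one_iff.mp h1
  have hp0 : (p:ℂ) ≠ 0 := by exact_mod_cast hp.out.ne_zero
  have h2pi : (2 * (Real.pi:ℂ) * Complex.I) ≠ 0 := by
    simp [Real.pi_ne_zero, Complex.I_ne_zero]
  rw [mul_div_assoc, mul_comm (n:ℂ)] at hn
  have h3 : ((a.val : ℂ)) / p = n := mul_left_cancel₀ h2pi hn
  have h4 : ((a.val : ℂ)) = n * p := by rw [div_eq_iff hp0] at h3; exact h3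
  have h5 : (a.val : ℤ) = n * p := by exact_mod_cast h4
  have h6 : (p:ℤ) ∣ (a.val : ℤ) := ⟨n, by linarith⟩
  have h7 : p ∣ a.val := Int.ofNat_dvd.mp h6
  have h8 : a.val ≠ 0 := fun h => hb ((ZMod.val_eq_zero _).mp h)
  have h9 := Nat.le_of_dvd (Nat.pos_of_ne_zero h8) h7
  have h10 := ZMod.val_lt a
  omega

lemma auxPsi_primitive : (auxPsi p K).IsPrimitive :=
  AddChar.IsPrimitive.of_ne_one (auxPsi_ne_one p K)

lemma auxPsi_orth (t : K) [DecidableEq K] :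
    ∑ u : K, auxPsi p K (u * t) = if t = 0 then (Fintype.card K : ℂ) else 0 := by
  rw [AddChar.sum_mulShift t (auxPsi_primitive p K)]
  split_ifs <;> simp

private lemma sum_split {α : Type} [Fintype α] [DecidableEq α] (a : α) (f : α → ℂ) :
    ∑ u : α, f u = f a + ∑ u ∈ Finset.univ.filter (fun u => u ≠ a), f u := by
  simp only [ne_eq]
  rw [← Finset.sum_filter_add_sum_filter_not Finset.univ (fun u => u = a) f,
    Finset.filter_eq', if_pos (Finset.mem_univ a), Finset.sum_singleton]

end Aux

/-- Let `p` be a prime, `q = p^r`, `m ≥ 1`, `c ∈ 𝔽_q`.  With the convention `0⁻¹ = 0`,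
`q²·#{z ∈ 𝔽_{q^m} : Tr_{𝔽_{q^m}/𝔽_q}(z) = 0, Tr_{𝔽_{q^m}/𝔽_q}(z⁻¹) = c}
  = q^m + ε + Σ_{v ∈ 𝔽_q^*} χ(-cv) Σ_{u ∈ 𝔽_q^*} S₋₁^{(m)}(u,v)`,
where `ε = (q-1)²` if `c = 0` and `ε = 1 - q` if `c ≠ 0`. -/
theorem count_prescribed_traces_kloosterman
    (p r m : ℕ) (hp : p.Prime) (hr : 0 < r) (hm : 0 < m)
    (F E : Type) [Field F] [Fintype F] [DecidableEq F] [Field E] [Fintype E] [DecidableEq E]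
    [Algebra (ZMod p) F] [Algebra (ZMod p) E] [Algebra F E]
    (hF : Fintype.card F = p ^ r) (hE : Fintype.card E = (p ^ r) ^ m)
    (c : F) :
    ((p : ℂ) ^ r) ^ 2 *
      (Nat.card {z : E // Algebra.trace F E z = 0 ∧ Algebra.trace F E z⁻¹ = c} : ℂ) =
      ((p : ℂ) ^ r) ^ m +
        (if c = 0 then ((p : ℂ) ^ r - 1) ^ 2 else 1 - (p : ℂ) ^ r) +
        ∑ v ∈ Finset.univ.filter (fun v : F => v ≠ 0),
          addChar p F (-(c * v)) *
            ∑ u ∈ Finset.univ.filter (fun u : F => u ≠ 0),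
              ∑ z ∈ Finset.univ.filter (fun z : E => z ≠ 0),
                addChar p E (algebraMap F E u * z + algebraMap F E v * z⁻¹) := by
  haveI : Fact p.Prime := ⟨hp⟩
  haveI : IsScalarTower (ZMod p) F E := IsScalarTower.of_algebraMap_eq' (Subsingleton.elim _ _)
  set q : ℂ := (p:ℂ)^r with hq
  have hqF : (Fintype.card F : ℂ) = q := by rw [hF]; push_cast; ring
  have hqE : (Fintype.card E : ℂ) = q^m := by rw [hE]; push_cast; ring
  set χ : AddChar F ℂ := auxPsi p F with hχdef
  set ψ : AddChar E ℂ := auxPsi p E with hψdef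
  have hχ : ∀ x : F, χ x = addChar p F x := fun x => rfl
  have hψ : ∀ x : E, ψ x = addChar p E x := fun x => rfl
  have orthF : ∀ t : F, ∑ u : F, χ (u * t) = if t = 0 then q else 0 := by
    intro t; rw [hχdef, auxPsi_orth p F t, hqF]
  have orthE : ∀ w : E, ∑ z : E, ψ (z * w) = if w = 0 then q^m else 0 := by
    intro w; rw [hψdef, auxPsi_orth p E w, hqE]
  -- the bridge between χ and ψ
  have bridge : ∀ (u : F) (z : E), χ (u * Algebra.trace F E z) = ψ (algebraMap F E u * z) := by
    intro u z
    have h1 : u * Algebra.trace F E z = Algebra.trace F E (algebraMap F E u * z) := by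
      rw [← Algebra.smul_def, map_smul, smul_eq_mul]
    rw [h1, hχ, hψ]
    unfold addChar
    rw [Algebra.trace_trace]
  -- the count as a complex number
  set N : ℂ := (Nat.card {z : E // Algebra.trace F E z = 0 ∧ Algebra.trace F E z⁻¹ = c} : ℂ)
    with hN
  have hcount : q^2 * N =
      ∑ z : E, (if Algebra.trace F E z = 0 then q else 0) *
        (if Algebra.trace F E z⁻¹ = c then q else 0) := by
    rw [hN, Nat.card_eq_fintype_card, Fintype.card_subtype, Finset.card_filter]
    rw [Nat.cast_sum, Finset.mul_sum]
    refine Finset.sum_congr rfl fun z _ => ?_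
    by_cases h1 : Algebra.trace F E z = 0 <;>
      by_cases h2 : Algebra.trace F E z⁻¹ = c <;> simp [h1, h2] <;> ring
  -- main expansion
  have expand : q^2 * N =
      ∑ u : F, ∑ v : F, χ (-(c*v)) *
        ∑ z : E, ψ (algebraMap F E u * z + algebraMap F E v * z⁻¹) := by
    rw [hcount]
    have step1 : ∀ z : E,
        (if Algebra.trace F E z = 0 then q else 0) *
          (if Algebra.trace F E z⁻¹ = c then q else 0)
        = ∑ u : F, ∑ v : F, χ (-(c*v)) *
            ψ (algebraMap F E u * z + algebraMap F E v * z⁻¹) := by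
      intro z
      have e1 : (∑ u : F, χ (u * Algebra.trace F E z)) = if Algebra.trace F E z = 0 then q else 0 :=
        orthF _
      have e2 : (∑ v : F, χ (v * (Algebra.trace F E z⁻¹ - c)))
          = if Algebra.trace F E z⁻¹ = c then q else 0 := by
        rw [orthF]; congr 1; simp [sub_eq_zero]
      rw [← e1, ← e2, Finset.sum_mul_sum]
      refine Finset.sum_congr rfl fun u _ => Finset.sum_congr rfl fun v _ => ?_
      have harg : v * (Algebra.trace F E z⁻¹ - c) = v * Algebra.trace F E z⁻¹ + (-(c*v)) := by ring
      rw [harg, AddChar.map_add_eq_mul, bridge, bridge, AddChar.map_add_eq_mul]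
      ring
    rw [Finset.sum_congr rfl fun z _ => step1 z]
    rw [Finset.sum_comm]
    refine Finset.sum_congr rfl fun u _ => ?_
    rw [Finset.sum_comm]
    refine Finset.sum_congr rfl fun v _ => ?_
    rw [Finset.mul_sum]
  -- split the sums
  have hinj : ∀ x : F, algebraMap F E x = 0 ↔ x = 0 := fun x => map_eq_zero _
  -- the inner z-sum over all of E
  set S : F → F → ℂ := fun u v => ∑ z : E, ψ (algebraMap F E u * z + algebraMap F E v * z⁻¹)
    with hS
  set T : F → F → ℂ := fun u v => ∑ z ∈ Finset.univ.filter (fun z : E => z ≠ 0),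
      ψ (algebraMap F E u * z + algebraMap F E v * z⁻¹) with hT
  have hS0v : ∀ v : F, S 0 v = if v = 0 then q^m else 0 := by
    intro v
    rw [hS]
    simp only [map_zero, zero_mul, zero_add]
    have hb : ∑ z : E, ψ (algebraMap F E v * z⁻¹) = ∑ z : E, ψ (z * algebraMap F E v) := by
      refine Fintype.sum_bijective (fun z : E => z⁻¹) (inv_involutive.bijective) _ _ fun z => ?_
      rw [mul_comm]
    rw [hb, orthE]
    congr 1
    simp [hinj]
  have hSu0 : ∀ u : F, u ≠ 0 → S u 0 = 0 := by
    intro u hu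
    rw [hS]
    simp only [map_zero, zero_mul, add_zero]
    have : ∑ z : E, ψ (algebraMap F E u * z) = ∑ z : E, ψ (z * algebraMap F E u) := by
      refine Finset.sum_congr rfl fun z _ => ?_; rw [mul_comm]
    rw [this, orthE, if_neg]
    simp [hinj, hu]
  have hST : ∀ u v : F, S u v = 1 + T u v := by
    intro u v
    show (∑ z : E, ψ (algebraMap F E u * z + algebraMap F E v * z⁻¹))
      = 1 + ∑ z ∈ Finset.univ.filter (fun z : E => z ≠ 0),
          ψ (algebraMap F E u * z + algebraMap F E v * z⁻¹)
    rw [sum_split (0:E)]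
    simp
  -- now compute
  rw [expand, sum_split (0:F) (fun u => ∑ v : F, χ (-(c*v)) * S u v)]
  -- u = 0 part
  have hu0 : ∑ v : F, χ (-(c*v)) * S 0 v = q^m := by
    have : ∀ v : F, χ (-(c*v)) * S 0 v = if v = 0 then q^m else 0 := by
      intro v
      rw [hS0v]
      by_cases h : v = 0 <;> simp [h]
    rw [Finset.sum_congr rfl fun v _ => this v, Finset.sum_ite_eq' Finset.univ (0:F)]
    simp
  rw [hu0]
  -- u ≠ 0 part : split v
  have husplit : ∀ u : F, u ≠ 0 →
      (∑ v : F, χ (-(c*v)) * S u v)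
        = ∑ v ∈ Finset.univ.filter (fun v : F => v ≠ 0), (χ (-(c*v)) + χ (-(c*v)) * T u v) := by
    intro u hu
    rw [sum_split (0:F) (fun v => χ (-(c*v)) * S u v), hSu0 u hu, mul_zero, zero_add]
    refine Finset.sum_congr rfl fun v _ => ?_
    rw [hST]; ring
  rw [Finset.sum_congr rfl fun u hu => husplit u (by simpa using hu)]
  -- card of nonzero elements
  have hcard : ((Finset.univ.filter (fun u : F => u ≠ 0)).card : ℂ) = q - 1 := by
    have : (Finset.univ.filter (fun u : F => u ≠ 0)) = Finset.univ.erase 0 := by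
      ext x; simp [Finset.mem_erase, and_comm]
    rw [this, Finset.card_erase_of_mem (Finset.mem_univ 0), Finset.card_univ]
    have hpos : 1 ≤ Fintype.card F := Fintype.card_pos
    rw [Nat.cast_sub hpos, hqF, Nat.cast_one]
  -- the sum W = ∑_{v≠0} χ(-(c v))
  have hW : ∑ v ∈ Finset.univ.filter (fun v : F => v ≠ 0), χ (-(c*v))
      = if c = 0 then q - 1 else -1 := by
    by_cases hc : c = 0
    · rw [if_pos hc]
      have : ∀ v : F, χ (-(c*v)) = 1 := by intro v; simp [hc]
      rw [Finset.sum_congr rfl fun v _ => this v, Finset.sum_const, nsmul_eq_mul, mul_one, hcard]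
    · rw [if_neg hc]
      have h0 : ∑ v : F, χ (v * (-c)) = 0 := by
        rw [orthF, if_neg (by simpa using hc)]
      have harg : ∀ v : F, χ (v * (-c)) = χ (-(c*v)) := by
        intro v; congr 1; ring
      rw [Finset.sum_congr rfl fun v _ => harg v] at h0
      rw [sum_split (0:F) (fun v => χ (-(c*v)))] at h0
      simp only [mul_zero, neg_zero, AddChar.map_zero_eq_one] at h0
      linear_combination h0
  -- expand the double sum over u ≠ 0
  rw [Finset.sum_congr rfl (fun u _ => Finset.sum_add_distrib)]
  rw [Finset.sum_add_distrib]
  -- first piece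
  have piece1 : ∑ _u ∈ Finset.univ.filter (fun u : F => u ≠ 0),
      ∑ v ∈ Finset.univ.filter (fun v : F => v ≠ 0), χ (-(c*v))
      = if c = 0 then (q-1)^2 else 1 - q := by
    rw [Finset.sum_const, hW, nsmul_eq_mul]
    have : ((Finset.univ.filter (fun u : F => u ≠ 0)).card : ℂ) = q - 1 := hcard
    rw [this]
    by_cases hc : c = 0 <;> simp [hc] <;> ring
  rw [piece1]
  -- second piece
  have piece2 : ∑ u ∈ Finset.univ.filter (fun u : F => u ≠ 0),
      ∑ v ∈ Finset.univ.filter (fun v : F => v ≠ 0), χ (-(c*v)) * T u v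
      = ∑ v ∈ Finset.univ.filter (fun v : F => v ≠ 0),
          addChar p F (-(c * v)) *
            ∑ u ∈ Finset.univ.filter (fun u : F => u ≠ 0),
              ∑ z ∈ Finset.univ.filter (fun z : E => z ≠ 0),
                addChar p E (algebraMap F E u * z + algebraMap F E v * z⁻¹) := by
    rw [Finset.sum_comm]
    refine Finset.sum_congr rfl fun v _ => ?_
    rw [← hχ, Finset.mul_sum]
    rfl
  rw [piece2]
  ring
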